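/- Let E be a complex Banach space, take p,q with 1 ≤ p ≤ q < ∞, and let (Ω,μ) be a measure space such that L^p(Ω) is infinite-dimensional. Then for every n ∈ ℕ and x₁,…,xₙ ∈ E, ‖(x₁,…,xₙ)‖ₙ^{(p,q)} = sup{‖(Tx₁,…,Txₙ)‖ₙ^{[q]} : T ∈ B(E, L^p(Ω)), ‖T‖ ≤ 1}; that is, the extension to E of the standard q-multi-norm on L^p(Ω) is exactly the (p,q)-multi-norm on E. -/

import Mathlib

open MeasureTheory NormedSpace
open scoped ENNReal

variable {E : Type*} [NormedAddCommGroup E] [NormedSpace ℂ E]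

/-- The weak `p`-summing norm `μ_{p,n}` of a tuple of functionals on `E`,
computed over the unit ball of `E`. -/
noncomputable def muPN (p : ℝ) {n : ℕ} (lam : Fin n → StrongDual ℂ E) : ℝ :=
  sSup {r : ℝ | ∃ x : E, ‖x‖ ≤ 1 ∧ r = (∑ i, ‖lam i x‖ ^ p) ^ (1 / p)}

/-- The `(p,q)`-multi-norm of a tuple `(x₁,…,xₙ)` in `E`. -/
noncomputable def pqNorm (p q : ℝ) {n : ℕ} (x : Fin n → E) : ℝ :=
  sSup {r : ℝ | ∃ lam : Fin n → StrongDual ℂ E, muPN p lam ≤ 1 ∧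
    r = (∑ i, ‖lam i (x i)‖ ^ q) ^ (1 / q)}

/-- The standard `q`-multi-norm of a tuple in `L^p(Ω)`: the supremum over measurable
partitions `{X₁,…,Xₙ}` of `Ω` of `(Σᵢ ‖χ_{Xᵢ} gᵢ‖_p^q)^{1/q}`. -/
noncomputable def stdQNorm {α : Type*} [MeasurableSpace α] (μ : Measure α)
    (pe : ℝ≥0∞) (q : ℝ) {n : ℕ} (g : Fin n → Lp ℂ pe μ) : ℝ :=
  sSup {r : ℝ | ∃ X : Fin n → Set α,
    (∀ i, MeasurableSet (X i)) ∧ Pairwise (Function.onFun Disjoint X) ∧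
    (⋃ i, X i) = Set.univ ∧
    r = (∑ i, (eLpNorm (g i) pe (μ.restrict (X i))).toReal ^ q) ^ (1 / q)}

namespace MultiNormAux

lemma rpow_rpow_inv {p a : ℝ} (hp : 0 < p) (ha : 0 ≤ a) : (a ^ p) ^ (1 / p) = a := by
  rw [← Real.rpow_mul ha, mul_one_div, div_self hp.ne', Real.rpow_one]

lemma sum_rpow_le_of_muPN_le_one {p : ℝ} (hp : 1 ≤ p) {n : ℕ} {lam : Fin n → StrongDual ℂ E}
    (h : muPN p lam ≤ 1) (x : E) :
    (∑ i, ‖lam i x‖ ^ p) ^ (1 / p) ≤ ‖x‖ := by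
  have hp0 : (0 : ℝ) < p := one_pos.trans_le hp
  have hbdd : BddAbove {r : ℝ | ∃ x : E, ‖x‖ ≤ 1 ∧ r = (∑ i, ‖lam i x‖ ^ p) ^ (1 / p)} := by
    refine ⟨(∑ i, ‖lam i‖ ^ p) ^ (1 / p), ?_⟩
    rintro r ⟨y, hy, rfl⟩
    refine Real.rpow_le_rpow (by positivity) (Finset.sum_le_sum fun i _ => ?_) (by positivity)
    exact Real.rpow_le_rpow (norm_nonneg _) ((lam i).unit_le_opNorm y hy) hp0.le
  have hunit : ∀ y : E, ‖y‖ ≤ 1 → (∑ i, ‖lam i y‖ ^ p) ^ (1 / p) ≤ 1 := fun y hy =>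
    le_trans (le_csSup hbdd ⟨y, hy, rfl⟩) h
  rcases eq_or_ne x 0 with rfl | hx
  · have : (∑ i : Fin n, ‖lam i (0 : E)‖ ^ p) = 0 := by
      simp [Real.zero_rpow hp0.ne']
    rw [this, Real.zero_rpow (by positivity : (1:ℝ)/p ≠ 0), norm_zero]
  · have hc : (0 : ℝ) < ‖x‖ := norm_pos_iff.2 hx
    set c : ℝ := ‖x‖ with hcdef
    have hy : ‖((c : ℂ)⁻¹) • x‖ ≤ 1 := by
      rw [norm_smul, norm_inv, Complex.norm_real, Real.norm_of_nonneg hc.le,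
        inv_mul_cancel₀ hc.ne']
    have hle := hunit _ hy
    have hlam : ∀ i : Fin n, ‖lam i (((c : ℂ)⁻¹) • x)‖ = c⁻¹ * ‖lam i x‖ := by
      intro i
      rw [_root_.map_smul, smul_eq_mul, norm_mul, norm_inv, Complex.norm_real,
        Real.norm_of_nonneg hc.le]
    simp only [hlam] at hle
    have hS : (0:ℝ) ≤ ∑ i, ‖lam i x‖ ^ p := by positivity
    have hmul : ∀ i : Fin n, (c⁻¹ * ‖lam i x‖) ^ p = c⁻¹ ^ p * ‖lam i x‖ ^ p := fun i =>
      Real.mul_rpow (by positivity) (norm_nonneg _)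
    simp only [hmul, ← Finset.mul_sum] at hle
    rw [Real.mul_rpow (by positivity) hS, rpow_rpow_inv hp0 (by positivity)] at hle
    calc (∑ i, ‖lam i x‖ ^ p) ^ (1 / p) = c * (c⁻¹ * (∑ i, ‖lam i x‖ ^ p) ^ (1 / p)) := by
          field_simp
      _ ≤ c * 1 := mul_le_mul_of_nonneg_left hle hc.le
      _ = c := mul_one c

lemma norm_apply_le_of_muPN_le_one {p : ℝ} (hp : 1 ≤ p) {n : ℕ} {lam : Fin n → StrongDual ℂ E}
    (h : muPN p lam ≤ 1) (i : Fin n) (z : E) : ‖lam i z‖ ≤ ‖z‖ := by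
  have hp0 : (0 : ℝ) < p := one_pos.trans_le hp
  refine le_trans ?_ (sum_rpow_le_of_muPN_le_one hp h z)
  calc ‖lam i z‖ = (‖lam i z‖ ^ p) ^ (1 / p) := (rpow_rpow_inv hp0 (norm_nonneg _)).symm
    _ ≤ (∑ j, ‖lam j z‖ ^ p) ^ (1 / p) := by
        refine Real.rpow_le_rpow (by positivity) ?_ (by positivity)
        exact Finset.single_le_sum (f := fun j => ‖lam j z‖ ^ p)
          (fun j _ => by positivity) (Finset.mem_univ i)

variable {α : Type*} [MeasurableSpace α] {μ : Measure α}

lemma sum_rpow_eLpNorm_restrict {p : ℝ} (hp : 1 ≤ p) {n : ℕ}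
    (f : Lp ℂ (ENNReal.ofReal p) μ) {X : Fin n → Set α}
    (hm : ∀ i, MeasurableSet (X i)) (hd : Pairwise (Function.onFun Disjoint X))
    (hu : (⋃ i, X i) = Set.univ) :
    ∑ i, (eLpNorm (f : α → ℂ) (ENNReal.ofReal p) (μ.restrict (X i))).toReal ^ p = ‖f‖ ^ p := by
  have hp0 : (0 : ℝ) < p := one_pos.trans_le hp
  have hpe0 : ENNReal.ofReal p ≠ 0 := by
    simp only [Ne, ENNReal.ofReal_eq_zero, not_le]; linarith
  have hpet : ENNReal.ofReal p ≠ ∞ := ENNReal.ofReal_ne_top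
  have hper : (ENNReal.ofReal p).toReal = p := ENNReal.toReal_ofReal hp0.le
  have hconv : ∀ ν : Measure α, (eLpNorm (f : α → ℂ) (ENNReal.ofReal p) ν).toReal ^ p
      = (∫⁻ a, (‖f a‖₊ : ℝ≥0∞) ^ p ∂ν).toReal := by
    intro ν
    simp only [eLpNorm_eq_lintegral_rpow_enorm_toReal hpe0 hpet, enorm_eq_nnnorm]
    rw [hper, ENNReal.toReal_rpow,
      ← ENNReal.rpow_mul, one_div, inv_mul_cancel₀ hp0.ne', ENNReal.rpow_one]
  have hItop : (∫⁻ a, (‖f a‖₊ : ℝ≥0∞) ^ p ∂μ) ≠ ∞ := by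
    have h1 : (∫⁻ a, (‖f a‖₊ : ℝ≥0∞) ^ p ∂μ)
        = (eLpNorm (f : α → ℂ) (ENNReal.ofReal p) μ) ^ p := by
      simp only [eLpNorm_eq_lintegral_rpow_enorm_toReal hpe0 hpet, enorm_eq_nnnorm]
      rw [hper, ← ENNReal.rpow_mul, one_div,
        inv_mul_cancel₀ hp0.ne', ENNReal.rpow_one]
    rw [h1]
    exact (ENNReal.rpow_lt_top_of_nonneg hp0.le (Lp.eLpNorm_ne_top f)).ne
  have hle : ∀ i, (∫⁻ a, (‖f a‖₊ : ℝ≥0∞) ^ p ∂(μ.restrict (X i))) ≠ ∞ := fun i =>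
    (lt_of_le_of_lt (lintegral_mono' Measure.restrict_le_self le_rfl) hItop.lt_top).ne
  have hsum : ∑ i, (∫⁻ a, (‖f a‖₊ : ℝ≥0∞) ^ p ∂(μ.restrict (X i)))
      = ∫⁻ a, (‖f a‖₊ : ℝ≥0∞) ^ p ∂μ := by
    have h2 := lintegral_iUnion hm hd (fun a => (‖f a‖₊ : ℝ≥0∞) ^ p) (μ := μ)
    rw [hu, Measure.restrict_univ, tsum_fintype] at h2
    exact h2.symm
  calc ∑ i, (eLpNorm (f : α → ℂ) (ENNReal.ofReal p) (μ.restrict (X i))).toReal ^ p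
      = ∑ i, (∫⁻ a, (‖f a‖₊ : ℝ≥0∞) ^ p ∂(μ.restrict (X i))).toReal := by simp_rw [hconv]
    _ = (∑ i, ∫⁻ a, (‖f a‖₊ : ℝ≥0∞) ^ p ∂(μ.restrict (X i))).toReal :=
        (ENNReal.toReal_sum fun i _ => hle i).symm
    _ = (∫⁻ a, (‖f a‖₊ : ℝ≥0∞) ^ p ∂μ).toReal := by rw [hsum]
    _ = ‖f‖ ^ p := by rw [Lp.norm_def, hconv]

noncomputable def indCLM (pe : ℝ≥0∞) [Fact (1 ≤ pe)] (μ : Measure α) {X : Set α}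
    (hX : MeasurableSet X) : Lp ℂ pe μ →L[ℂ] Lp ℂ pe μ :=
  LinearMap.mkContinuous
    { toFun := fun f => MemLp.toLp (X.indicator f) ((Lp.memLp f).indicator hX)
      map_add' := fun f g => by
        rw [← MemLp.toLp_add]
        refine (MemLp.toLp_eq_toLp_iff _ _).2 ?_
        filter_upwards [Lp.coeFn_add f g] with a ha
        rw [Pi.add_apply]
        by_cases hax : a ∈ X
        · rw [Set.indicator_of_mem hax, Set.indicator_of_mem hax, Set.indicator_of_mem hax,
            ha, Pi.add_apply]
        · rw [Set.indicator_of_notMem hax, Set.indicator_of_notMem hax,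
            Set.indicator_of_notMem hax, add_zero]
      map_smul' := fun c f => by
        dsimp only [RingHom.id_apply]
        rw [← MemLp.toLp_const_smul]
        refine (MemLp.toLp_eq_toLp_iff _ _).2 ?_
        filter_upwards [Lp.coeFn_smul c f] with a ha
        rw [Pi.smul_apply]
        by_cases hax : a ∈ X
        · rw [Set.indicator_of_mem hax, Set.indicator_of_mem hax, ha, Pi.smul_apply]
        · rw [Set.indicator_of_notMem hax, Set.indicator_of_notMem hax, smul_zero] }
    1 (fun f => by
      rw [one_mul, LinearMap.coe_mk, AddHom.coe_mk, Lp.norm_toLp, Lp.norm_def]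
      exact ENNReal.toReal_mono (Lp.eLpNorm_ne_top f) (eLpNorm_indicator_le _))

lemma norm_indCLM (pe : ℝ≥0∞) [Fact (1 ≤ pe)] {X : Set α} (hX : MeasurableSet X)
    (f : Lp ℂ pe μ) :
    ‖indCLM pe μ hX f‖ = (eLpNorm (f : α → ℂ) pe (μ.restrict X)).toReal := by
  rw [indCLM, LinearMap.mkContinuous_apply, LinearMap.coe_mk, AddHom.coe_mk, Lp.norm_toLp,
    eLpNorm_indicator_eq_eLpNorm_restrict hX]

lemma norm_indCLM_le (pe : ℝ≥0∞) [Fact (1 ≤ pe)] {X : Set α} (hX : MeasurableSet X)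
    (f : Lp ℂ pe μ) : ‖indCLM pe μ hX f‖ ≤ ‖f‖ := by
  rw [norm_indCLM, Lp.norm_def]
  exact ENNReal.toReal_mono (Lp.eLpNorm_ne_top f) (eLpNorm_mono_measure _ Measure.restrict_le_self)

lemma coeFn_sum_ae {pe : ℝ≥0∞} [Fact (1 ≤ pe)] {ι : Type*} (s : Finset ι)
    (f : ι → Lp ℂ pe μ) :
    ⇑(∑ i ∈ s, f i) =ᵐ[μ] fun a => ∑ i ∈ s, f i a := by
  classical
  induction s using Finset.induction_on with
  | empty => simp only [Finset.sum_empty]; exact Lp.coeFn_zero (E := ℂ) (p := pe) (μ := μ)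
  | insert i s h ih =>
    rw [Finset.sum_insert h]
    filter_upwards [Lp.coeFn_add (f i) (∑ j ∈ s, f j), ih] with a h1 h2
    rw [h1, Pi.add_apply, h2]
    simp [Finset.sum_insert h]

lemma eLpNorm_restrict_eq_of_eq_indicator {pe : ℝ≥0∞} (hpe0 : pe ≠ 0)
    {X Y : Set α} (hXm : MeasurableSet X) (hYm : MeasurableSet Y)
    (hXY : X ⊆ Y) (hμX : μ X ≠ 0)
    {g : α → ℂ} {c : ℂ} (hg : ∀ a ∈ Y, g a = X.indicator (fun _ => c) a) :
    eLpNorm g pe (μ.restrict Y) = (‖c‖₊ : ℝ≥0∞) * (μ X) ^ (1 / pe.toReal) := by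
  have h1 : g =ᵐ[μ.restrict Y] X.indicator (fun _ => c) := ae_restrict_of_forall_mem hYm hg
  rw [eLpNorm_congr_ae h1, eLpNorm_indicator_eq_eLpNorm_restrict hXm,
    Measure.restrict_restrict hXm, Set.inter_eq_self_of_subset_left hXY,
    eLpNorm_const _ hpe0 (by rwa [Ne, Measure.restrict_eq_zero]),
    Measure.restrict_apply_univ, enorm_eq_nnnorm]

/-- Key computation: the restricted norm of `(∑ i, lamᵢ ⊗ fᵢ) z` on `Y j`. -/
lemma restrict_norm_eq {pe : ℝ≥0∞} (hpe0 : pe ≠ 0) [Fact (1 ≤ pe)] {n : ℕ}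
    (lam : Fin n → StrongDual ℂ E) {X Y : Fin n → Set α} {c : Fin n → ℂ}
    {f : Fin n → Lp ℂ pe μ} (hf : ∀ i, ⇑(f i) =ᵐ[μ] (X i).indicator fun _ => c i)
    (hXm : ∀ i, MeasurableSet (X i)) (hpos : ∀ i, μ (X i) ≠ 0)
    (hYm : ∀ j, MeasurableSet (Y j)) (hXY : ∀ j, X j ⊆ Y j)
    (hYX : ∀ j i, j ≠ i → ∀ a ∈ Y j, a ∉ X i) (z : E) (j : Fin n) :
    (eLpNorm (⇑((∑ i, (lam i).smulRight (f i) : E →L[ℂ] Lp ℂ pe μ) z)) pe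
        (μ.restrict (Y j))).toReal
      = ‖lam j z‖ * (‖c j‖ * (μ (X j)).toReal ^ (1 / pe.toReal)) := by
  classical
  have hTz : ⇑((∑ i, (lam i).smulRight (f i) : E →L[ℂ] Lp ℂ pe μ) z)
      =ᵐ[μ] fun a => ∑ i, lam i z • (X i).indicator (fun _ => c i) a := by
    have h0 : ((∑ i, (lam i).smulRight (f i) : E →L[ℂ] Lp ℂ pe μ) z)
        = ∑ i, lam i z • f i := by
      simp [ContinuousLinearMap.sum_apply]
    rw [h0]
    have h2 : ∀ᵐ a ∂μ, ∀ i, ⇑(lam i z • f i) a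
        = lam i z • (X i).indicator (fun _ => c i) a := by
      rw [ae_all_iff]
      intro i
      filter_upwards [Lp.coeFn_smul (lam i z) (f i), hf i] with a h1 h2
      rw [h1, Pi.smul_apply, h2]
    filter_upwards [coeFn_sum_ae Finset.univ (fun i => lam i z • f i), h2] with a h1 h2
    rw [h1]
    exact Finset.sum_congr rfl fun i _ => h2 i
  have hcongr : eLpNorm (⇑((∑ i, (lam i).smulRight (f i) : E →L[ℂ] Lp ℂ pe μ) z)) pe
      (μ.restrict (Y j))
      = eLpNorm (fun a => ∑ i, lam i z • (X i).indicator (fun _ => c i) a) pe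
        (μ.restrict (Y j)) :=
    eLpNorm_congr_ae (ae_restrict_of_ae hTz)
  have hpt : ∀ a ∈ Y j, (∑ i, lam i z • (X i).indicator (fun _ => c i) a)
      = (X j).indicator (fun _ => lam j z • c j) a := by
    intro a ha
    rw [Finset.sum_eq_single j]
    · by_cases hax : a ∈ X j
      · rw [Set.indicator_of_mem hax, Set.indicator_of_mem hax]
      · rw [Set.indicator_of_notMem hax, Set.indicator_of_notMem hax, smul_zero]
    · intro i _ hij
      rw [Set.indicator_of_notMem (hYX j i (Ne.symm hij) a ha), smul_zero]
    · intro h; exact absurd (Finset.mem_univ j) h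
  rw [hcongr, eLpNorm_restrict_eq_of_eq_indicator hpe0 (hXm j) (hYm j) (hXY j) (hpos j) hpt,
    ENNReal.toReal_mul, ← ENNReal.toReal_rpow, ENNReal.coe_toReal, coe_nnnorm,
    smul_eq_mul, norm_mul, mul_assoc]

lemma stdQNorm_set_le {pe : ℝ≥0∞} [Fact (1 ≤ pe)] {q : ℝ} (hq : 0 < q) {n : ℕ}
    (g : Fin n → Lp ℂ pe μ) {r : ℝ}
    (hr : r ∈ {r : ℝ | ∃ X : Fin n → Set α,
      (∀ i, MeasurableSet (X i)) ∧ Pairwise (Function.onFun Disjoint X) ∧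
      (⋃ i, X i) = Set.univ ∧
      r = (∑ i, (eLpNorm (g i) pe (μ.restrict (X i))).toReal ^ q) ^ (1 / q)}) :
    r ≤ (∑ i, ‖g i‖ ^ q) ^ (1 / q) := by
  obtain ⟨X, hm, hd, hu, rfl⟩ := hr
  refine Real.rpow_le_rpow (by positivity) (Finset.sum_le_sum fun i _ => ?_) (by positivity)
  refine Real.rpow_le_rpow ENNReal.toReal_nonneg ?_ hq.le
  rw [Lp.norm_def]
  exact ENNReal.toReal_mono (Lp.eLpNorm_ne_top _) (eLpNorm_mono_measure _ Measure.restrict_le_self)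

lemma trivial_partition {n : ℕ} (hn : 0 < n) :
    ∃ X : Fin n → Set α, (∀ i, MeasurableSet (X i)) ∧
      Pairwise (Function.onFun Disjoint X) ∧ (⋃ i, X i) = Set.univ := by
  refine ⟨fun i => if i = ⟨0, hn⟩ then Set.univ else ∅,
    fun i => by dsimp only; split <;> simp, ?_, ?_⟩
  · intro i j hij
    unfold Function.onFun
    dsimp only
    rcases eq_or_ne i ⟨0, hn⟩ with rfl | hi
    · rw [if_neg (Ne.symm hij)]; simp
    · rw [if_neg hi]; simp
  · rw [Set.iUnion_eq_univ_iff]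
    exact fun a => ⟨⟨0, hn⟩, by simp⟩

end MultiNormAux

open MultiNormAux in
/-- for a complex Banach space `E`, `1 ≤ p ≤ q < ∞`, and a measure space
`(Ω,μ)` with `L^p(Ω)` infinite-dimensional, the extension to `E` of the standard
`q`-multi-norm on `L^p(Ω)` is exactly the `(p,q)`-multi-norm on `E`. -/
theorem extension_of_standard_q_multinorm_eq_pq_multinorm
    [CompleteSpace E]
    {α : Type*} [MeasurableSpace α] (μ : Measure α)
    (p q : ℝ) (hp : 1 ≤ p) (hpq : p ≤ q) [Fact (1 ≤ ENNReal.ofReal p)]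
    (hdim : ∀ m : ℕ, ∃ X : Fin m → Set α, (∀ i, MeasurableSet (X i)) ∧
      Pairwise (Function.onFun Disjoint X) ∧ ∀ i, 0 < μ (X i) ∧ μ (X i) < ∞)
    (n : ℕ) (hn : 0 < n) (x : Fin n → E) :
    pqNorm p q x
      = sSup {r : ℝ | ∃ T : E →L[ℂ] Lp ℂ (ENNReal.ofReal p) μ, ‖T‖ ≤ 1 ∧
          r = stdQNorm μ (ENNReal.ofReal p) q (fun i => T (x i))} := by
  classical
  have hp0 : (0 : ℝ) < p := one_pos.trans_le hp
  have hq0 : (0 : ℝ) < q := hp0.trans_le hpq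
  have hpe0 : ENNReal.ofReal p ≠ 0 := by
    simp only [Ne, ENNReal.ofReal_eq_zero, not_le]; linarith
  have hper : (ENNReal.ofReal p).toReal = p := ENNReal.toReal_ofReal hp0.le
  -- boundedness of the pqNorm index set
  have hA_bdd : BddAbove {r : ℝ | ∃ lam : Fin n → StrongDual ℂ E, muPN p lam ≤ 1 ∧
      r = (∑ i, ‖lam i (x i)‖ ^ q) ^ (1 / q)} := by
    refine ⟨(∑ i, ‖x i‖ ^ q) ^ (1 / q), ?_⟩
    rintro r ⟨lam, hlam, rfl⟩
    refine Real.rpow_le_rpow (by positivity) (Finset.sum_le_sum fun i _ => ?_) (by positivity)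
    exact Real.rpow_le_rpow (norm_nonneg _)
      (norm_apply_le_of_muPN_le_one hp hlam i (x i)) hq0.le
  -- boundedness of the RHS set
  have hB_bdd : BddAbove {r : ℝ | ∃ T : E →L[ℂ] Lp ℂ (ENNReal.ofReal p) μ, ‖T‖ ≤ 1 ∧
      r = stdQNorm μ (ENNReal.ofReal p) q (fun i => T (x i))} := by
    refine ⟨(∑ i, ‖x i‖ ^ q) ^ (1 / q), ?_⟩
    rintro r ⟨T, hT, rfl⟩
    obtain ⟨Z, hZm, hZd, hZu⟩ := trivial_partition (α := α) hn
    rw [stdQNorm]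
    refine csSup_le ?_ ?_
    · exact ⟨_, Z, hZm, hZd, hZu, rfl⟩
    intro s hs
    refine le_trans (stdQNorm_set_le hq0 _ hs) ?_
    refine Real.rpow_le_rpow (by positivity) (Finset.sum_le_sum fun i _ => ?_) (by positivity)
    refine Real.rpow_le_rpow (norm_nonneg _) ?_ hq0.le
    calc ‖T (x i)‖ ≤ ‖T‖ * ‖x i‖ := T.le_opNorm (x i)
      _ ≤ 1 * ‖x i‖ := mul_le_mul_of_nonneg_right hT (norm_nonneg _)
      _ = ‖x i‖ := one_mul _
  refine le_antisymm ?_ ?_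
  · -- pqNorm ≤ sSup RHS
    rw [pqNorm]
    refine csSup_le ?_ ?_
    · refine ⟨_, fun _ => 0, ?_, rfl⟩
      rw [muPN]
      refine csSup_le ?_ ?_
      · exact ⟨_, 0, by simp, rfl⟩
      rintro s ⟨z, hz, rfl⟩
      simp [Real.zero_rpow hp0.ne', Real.zero_rpow (one_div_ne_zero hp0.ne'),
        Real.zero_rpow (inv_ne_zero hp0.ne')]
    rintro r ⟨lam, hlam, rfl⟩
    obtain ⟨X, hXm, hXd, hXpf⟩ := hdim n
    have hpos : ∀ i, μ (X i) ≠ 0 := fun i => (hXpf i).1.ne'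
    have hfin : ∀ i, μ (X i) ≠ ∞ := fun i => (hXpf i).2.ne
    have hmpos : ∀ i, 0 < (μ (X i)).toReal := fun i =>
      ENNReal.toReal_pos (hpos i) (hfin i)
    set c : Fin n → ℂ := fun i => (((μ (X i)).toReal ^ (-(1/p)) : ℝ) : ℂ) with hc
    set f : Fin n → Lp ℂ (ENNReal.ofReal p) μ :=
      fun i => indicatorConstLp (ENNReal.ofReal p) (hXm i) (hfin i) (c i) with hfdef
    have hfcoe : ∀ i, ⇑(f i) =ᵐ[μ] (X i).indicator fun _ => c i := fun i =>
      indicatorConstLp_coeFn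
    set T : E →L[ℂ] Lp ℂ (ENNReal.ofReal p) μ := ∑ i, (lam i).smulRight (f i) with hTdef
    set j0 : Fin n := ⟨0, hn⟩ with hj0
    set Y : Fin n → Set α := fun j => if j = j0 then X j ∪ (⋃ i, X i)ᶜ else X j with hY
    have hYm : ∀ j, MeasurableSet (Y j) := fun j => by
      rw [hY]; dsimp only; split
      · exact (hXm _).union (MeasurableSet.iUnion hXm).compl
      · exact hXm _
    have hXY : ∀ j, X j ⊆ Y j := fun j => by
      rw [hY]; dsimp only; split
      · exact Set.subset_union_left
      · exact subset_rfl
    have hYX : ∀ j i, j ≠ i → ∀ a ∈ Y j, a ∉ X i := by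
      intro j i hij a ha hai
      rw [hY] at ha; dsimp only at ha
      have hXdis := hXd hij
      by_cases hjj : j = j0
      · rw [if_pos hjj] at ha
        rcases ha with ha | ha
        · exact Set.disjoint_left.1 hXdis ha hai
        · exact ha (Set.mem_iUnion.2 ⟨i, hai⟩)
      · rw [if_neg hjj] at ha
        exact Set.disjoint_left.1 hXdis ha hai
    have hYd : Pairwise (Function.onFun Disjoint Y) := by
      have key : ∀ i j : Fin n, i ≠ j → j ≠ j0 → Disjoint (Y i) (Y j) := by
        intro i j hij hj
        have hYj : Y j = X j := by rw [hY]; dsimp only; rw [if_neg hj]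
        rw [hYj]
        exact Set.disjoint_left.2 fun a ha => hYX i j hij a ha
      intro i j hij
      by_cases hj : j = j0
      · have hi : i ≠ j0 := by rw [hj] at hij; exact hij
        exact (key j i (Ne.symm hij) hi).symm
      · exact key i j hij hj
    have hYu : (⋃ j, Y j) = Set.univ := by
      rw [Set.iUnion_eq_univ_iff]
      intro a
      by_cases ha : a ∈ ⋃ i, X i
      · obtain ⟨i, hi⟩ := Set.mem_iUnion.1 ha
        exact ⟨i, hXY i hi⟩
      · refine ⟨j0, ?_⟩
        rw [hY]; dsimp only; rw [if_pos rfl]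
        exact Or.inr ha
    have hkey : ∀ (z : E) (j : Fin n),
        (eLpNorm (⇑(T z)) (ENNReal.ofReal p) (μ.restrict (Y j))).toReal = ‖lam j z‖ := by
      intro z j
      rw [hTdef, restrict_norm_eq hpe0 lam hfcoe hXm hpos hYm hXY hYX z j, hper]
      have h1 : ‖c j‖ = (μ (X j)).toReal ^ (-(1/p)) := by
        rw [hc]; dsimp only
        rw [Complex.norm_real, Real.norm_of_nonneg (Real.rpow_nonneg ENNReal.toReal_nonneg _)]
      rw [h1, ← Real.rpow_add (hmpos j), neg_add_cancel, Real.rpow_zero, mul_one]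
    have hTz : ∀ z : E, ‖T z‖ ≤ ‖z‖ := by
      intro z
      have h2 := sum_rpow_eLpNorm_restrict hp (T z) hYm hYd hYu
      simp_rw [hkey z] at h2
      have h3 := sum_rpow_le_of_muPN_le_one hp hlam z
      calc ‖T z‖ = (‖T z‖ ^ p) ^ (1/p) := (rpow_rpow_inv hp0 (norm_nonneg _)).symm
        _ = (∑ j, ‖lam j z‖ ^ p) ^ (1/p) := by rw [h2]
        _ ≤ ‖z‖ := h3
    have hT1 : ‖T‖ ≤ 1 := T.opNorm_le_bound zero_le_one fun z => by
      rw [one_mul]; exact hTz z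
    refine le_trans ?_ (le_csSup hB_bdd ⟨T, hT1, rfl⟩)
    rw [stdQNorm]
    apply le_csSup
    · exact ⟨_, fun r hr => stdQNorm_set_le hq0 _ hr⟩
    · exact ⟨Y, hYm, hYd, hYu, by simp only [hkey]⟩
  · -- sSup RHS ≤ pqNorm
    refine csSup_le ?_ ?_
    · exact ⟨_, 0, by simp, rfl⟩
    rintro r ⟨T, hT, rfl⟩
    rw [stdQNorm]
    obtain ⟨Z, hZm, hZd, hZu⟩ := trivial_partition (α := α) hn
    refine csSup_le ?_ ?_
    · exact ⟨_, Z, hZm, hZd, hZu, rfl⟩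
    rintro r ⟨X, hXm, hXd, hXu, rfl⟩
    have hdual : ∀ i : Fin n, ∃ g : (Lp ℂ (ENNReal.ofReal p) μ) →L[ℂ] ℂ, ‖g‖ ≤ 1 ∧
        g (indCLM (ENNReal.ofReal p) μ (hXm i) (T (x i)))
          = (‖indCLM (ENNReal.ofReal p) μ (hXm i) (T (x i))‖ : ℂ) :=
      fun i => exists_dual_vector'' ℂ _
    choose g hg1 hg2 using hdual
    set lam : Fin n → StrongDual ℂ E :=
      fun i => (g i).comp ((indCLM (ENNReal.ofReal p) μ (hXm i)).comp T) with hlamdef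
    have hlamle : ∀ (z : E) (i : Fin n),
        ‖lam i z‖ ≤ (eLpNorm (⇑(T z)) (ENNReal.ofReal p) (μ.restrict (X i))).toReal := by
      intro z i
      rw [← norm_indCLM (ENNReal.ofReal p) (hXm i) (T z)]
      calc ‖lam i z‖ ≤ ‖g i‖ * ‖indCLM (ENNReal.ofReal p) μ (hXm i) (T z)‖ :=
            (g i).le_opNorm _
        _ ≤ 1 * ‖indCLM (ENNReal.ofReal p) μ (hXm i) (T z)‖ :=
            mul_le_mul_of_nonneg_right (hg1 i) (norm_nonneg _)
        _ = _ := one_mul _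
    have hmu : muPN p lam ≤ 1 := by
      rw [muPN]
      refine csSup_le ?_ ?_
      · exact ⟨_, 0, by simp, rfl⟩
      rintro s ⟨z, hz, rfl⟩
      have h1 : (∑ i, ‖lam i z‖ ^ p)
          ≤ ∑ i, (eLpNorm (⇑(T z)) (ENNReal.ofReal p) (μ.restrict (X i))).toReal ^ p :=
        Finset.sum_le_sum fun i _ =>
          Real.rpow_le_rpow (norm_nonneg _) (hlamle z i) hp0.le
      have h2 := sum_rpow_eLpNorm_restrict hp (T z) hXm hXd hXu
      calc (∑ i, ‖lam i z‖ ^ p) ^ (1 / p) ≤ (‖T z‖ ^ p) ^ (1 / p) :=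
            Real.rpow_le_rpow (by positivity) (h2 ▸ h1) (by positivity)
        _ = ‖T z‖ := rpow_rpow_inv hp0 (norm_nonneg _)
        _ ≤ ‖T‖ * ‖z‖ := T.le_opNorm z
        _ ≤ 1 * 1 := mul_le_mul hT hz (norm_nonneg _) zero_le_one
        _ = 1 := one_mul 1
    have hval : ∀ i : Fin n,
        (eLpNorm (⇑(T (x i))) (ENNReal.ofReal p) (μ.restrict (X i))).toReal
          = ‖lam i (x i)‖ := by
      intro i
      have : lam i (x i) = (‖indCLM (ENNReal.ofReal p) μ (hXm i) (T (x i))‖ : ℂ) := hg2 i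
      rw [this, Complex.norm_real, Real.norm_of_nonneg (norm_nonneg _),
        norm_indCLM (ENNReal.ofReal p) (hXm i)]
    rw [pqNorm]
    apply le_csSup hA_bdd
    exact ⟨lam, hmu, by simp_rw [hval]⟩
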